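/- (Signal Alignment for Unqualified Path within Qualified Component) Let G be a non-degenerate CDS instance and consider a CDS scheme for G over F_p with parameters (L, L_Z, N) where N = L (rate 1/2). Then for every unqualified path (v_1, v_2, …, v_P) all of whose vertices lie in the same qualified component of G, the joint entropy of the two end signals satisfies H(v_1, v_P) ≤ L in p-ary units. -/

import Mathlib

open scoped BigOperators

/-- Probability that the random variable `X`, defined on a finite sample space `Ω`
equipped with the uniform distribution, takes the value `a`. -/
noncomputable def prb {Ω α : Type*} [Fintype Ω] (X : Ω → α) (a : α) : ℝ :=
  (Nat.card {ω : Ω // X ω = a} : ℝ) / (Fintype.card Ω : ℝ)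

/-- Shannon entropy, in `p`-ary units (logarithm base `p`), of the random variable `X`
defined on a finite sample space `Ω` equipped with the uniform distribution. -/
noncomputable def entp (p : ℕ) {Ω α : Type*} [Fintype Ω] [Fintype α] (X : Ω → α) : ℝ :=
  ∑ a : α, -(prb X a * Real.logb p (prb X a))

/-- Correctness of a CDS scheme `φ`: for every qualified edge `{v,u}`, the secret is
determined by the pair of signals. -/
def CDSCorrect {V : Type*} (Q : SimpleGraph V) {p L LZ N : ℕ}
    (φ : V → (Fin L → ZMod p) → (Fin LZ → ZMod p) → (Fin N → ZMod p)) : Prop :=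
  ∀ v u : V, Q.Adj v u →
    ∃ g : (Fin N → ZMod p) → (Fin N → ZMod p) → (Fin L → ZMod p),
      ∀ s z, g (φ v s z) (φ u s z) = s

/-- Security of a CDS scheme `φ`: for every unqualified edge `{v,u}`, the pair of signals
is statistically independent of the (uniform) secret. -/
def CDSSecure {V : Type*} (U : SimpleGraph V) {p L LZ N : ℕ}
    (φ : V → (Fin L → ZMod p) → (Fin LZ → ZMod p) → (Fin N → ZMod p)) : Prop :=
  ∀ v u : V, U.Adj v u → ∀ (s₁ s₂ : Fin L → ZMod p) (a b : Fin N → ZMod p),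
    Nat.card {z : Fin LZ → ZMod p // φ v s₁ z = a ∧ φ u s₁ z = b} =
    Nat.card {z : Fin LZ → ZMod p // φ v s₂ z = a ∧ φ u s₂ z = b}

lemma prb_nonneg {Ω α : Type*} [Fintype Ω] (X : Ω → α) (a : α) : 0 ≤ prb X a := by
  unfold prb; positivity

lemma prb_eq_card {Ω α : Type*} [Fintype Ω] [DecidableEq α] (X : Ω → α) (a : α) :
    prb X a = ((Finset.univ.filter fun ω => X ω = a).card : ℝ) / (Fintype.card Ω : ℝ) := by
  unfold prb
  rw [Nat.card_eq_fintype_card, Fintype.card_subtype]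

lemma prb_eq_zero_of_not_exists {Ω α : Type*} [Fintype Ω] (X : Ω → α) (a : α)
    (h : ¬ ∃ ω, X ω = a) : prb X a = 0 := by
  unfold prb
  have : IsEmpty {ω : Ω // X ω = a} := ⟨fun ⟨ω, hω⟩ => h ⟨ω, hω⟩⟩
  simp [Nat.card_of_isEmpty]

lemma sum_prb {Ω α : Type*} [Fintype Ω] [Fintype α] [Nonempty Ω] (X : Ω → α) :
    ∑ a : α, prb X a = 1 := by
  classical
  have h : ∑ a : α, ((Finset.univ.filter fun ω => X ω = a).card : ℝ)
      = (Fintype.card Ω : ℝ) := by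
    rw [← Nat.cast_sum]
    norm_cast
    exact (Finset.card_eq_sum_card_fiberwise (f := X) (t := Finset.univ)
      (fun x _ => Finset.mem_univ _)).symm
  have hΩ : (0:ℝ) < (Fintype.card Ω : ℝ) := by
    exact_mod_cast Fintype.card_pos
  simp only [prb_eq_card]
  rw [← Finset.sum_div, h, div_self hΩ.ne']

/-- Max-entropy bound: if `X` takes values in `T` then `entp p X ≤ logb p T.card`. -/
lemma entp_le_logb_card {Ω α : Type*} [Fintype Ω] [Fintype α] [Nonempty Ω]
    (p : ℕ) (hp : 1 < p) (X : Ω → α) (T : Finset α) (hT : ∀ ω, X ω ∈ T) :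
    entp p X ≤ Real.logb p T.card := by
  classical
  set q : α → ℝ := prb X with hq
  have hq0 : ∀ a, 0 ≤ q a := prb_nonneg X
  set T' : Finset α := T.filter (fun a => q a ≠ 0) with hT'
  have hvanish : ∀ a ∈ Finset.univ, a ∉ T' → -(q a * Real.logb p (q a)) = 0 := by
    intro a _ ha
    by_cases h : q a = 0
    · simp [h]
    · exfalso
      apply ha
      rw [hT', Finset.mem_filter]
      refine ⟨?_, h⟩
      by_contra haT
      exact h (prb_eq_zero_of_not_exists X a (fun ⟨ω, hω⟩ => haT (hω ▸ hT ω)))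
  have hsum1 : ∑ a ∈ T', q a = 1 := by
    have hzero : ∀ a ∈ Finset.univ, a ∉ T' → q a = 0 := by
      intro a _ ha
      by_cases h : q a = 0
      · exact h
      · exfalso
        apply ha
        rw [hT', Finset.mem_filter]
        refine ⟨?_, h⟩
        by_contra haT
        exact h (prb_eq_zero_of_not_exists X a (fun ⟨ω, hω⟩ => haT (hω ▸ hT ω)))
    have := Finset.sum_subset (Finset.subset_univ T') hzero
    rw [this]
    exact sum_prb X
  have hqpos : ∀ a ∈ T', 0 < q a := by
    intro a ha
    rw [hT', Finset.mem_filter] at ha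
    exact lt_of_le_of_ne (hq0 a) (Ne.symm ha.2)
  have hent : entp p X = ∑ a ∈ T', q a * Real.logb p (q a)⁻¹ := by
    unfold entp
    rw [← Finset.sum_subset (Finset.subset_univ T') hvanish]
    apply Finset.sum_congr rfl
    intro a ha
    rw [Real.logb_inv]
    ring
  rw [hent]
  have hlogp : (0:ℝ) < Real.log p := Real.log_pos (by exact_mod_cast hp)
  have hjensen : ∑ a ∈ T', q a * Real.log (q a)⁻¹ ≤ Real.log (T'.card : ℝ) := by
    have := ConcaveOn.le_map_sum (f := Real.log) (s := Set.Ioi (0:ℝ))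
      (t := T') (w := q) (p := fun a => (q a)⁻¹)
      strictConcaveOn_log_Ioi.concaveOn
      (fun a ha => hq0 a) hsum1
      (fun a ha => Set.mem_Ioi.mpr (inv_pos.mpr (hqpos a ha)))
    simp only [smul_eq_mul] at this
    calc ∑ a ∈ T', q a * Real.log (q a)⁻¹
        ≤ Real.log (∑ a ∈ T', q a * (q a)⁻¹) := this
      _ = Real.log (T'.card : ℝ) := by
          congr 1
          rw [Finset.sum_congr rfl (fun a ha => mul_inv_cancel₀ (hqpos a ha).ne')]
          simp
  have hT'ne : T'.Nonempty := by
    by_contra h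
    rw [Finset.not_nonempty_iff_eq_empty] at h
    rw [h] at hsum1
    simp at hsum1
  calc ∑ a ∈ T', q a * Real.logb p (q a)⁻¹
      = (∑ a ∈ T', q a * Real.log (q a)⁻¹) / Real.log p := by
        rw [Finset.sum_div]
        apply Finset.sum_congr rfl
        intro a _
        rw [Real.logb, mul_div_assoc]
    _ ≤ Real.log (T'.card : ℝ) / Real.log p := by
        gcongr
    _ = Real.logb p (T'.card : ℝ) := rfl
    _ ≤ Real.logb p (T.card : ℝ) := by
        refine Real.logb_le_logb_of_le (by exact_mod_cast hp) ?_ ?_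
        · exact_mod_cast hT'ne.card_pos
        · exact_mod_cast Finset.card_le_card (Finset.filter_subset _ _)

section CDSLemmas


variable {V : Type*} {p L LZ : ℕ} [NeZero p]
variable (φ : V → (Fin L → ZMod p) → (Fin LZ → ZMod p) → (Fin L → ZMod p))

/-- From security: the fiber counts of a single signal do not depend on the secret. -/
lemma filter_card_const (U : SimpleGraph V)
    (hsec : CDSSecure U φ) {v u : V} (hadj : U.Adj v u)
    (s₁ s₂ a : Fin L → ZMod p) :
    (Finset.univ.filter fun z => φ v s₁ z = a).card
      = (Finset.univ.filter fun z => φ v s₂ z = a).card := by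
  classical
  have key : ∀ s : Fin L → ZMod p,
      (Finset.univ.filter fun z => φ v s z = a).card
        = ∑ b : Fin L → ZMod p,
            (Finset.univ.filter fun z => φ v s z = a ∧ φ u s z = b).card := by
    intro s
    rw [Finset.card_eq_sum_card_fiberwise (f := fun z => φ u s z) (t := Finset.univ)
      (fun x _ => Finset.mem_univ _)]
    apply Finset.sum_congr rfl
    intro b _
    rw [Finset.filter_filter]
  rw [key s₁, key s₂]
  apply Finset.sum_congr rfl
  intro b _
  have := hsec v u hadj s₁ s₂ a b
  rwa [Nat.card_eq_fintype_card, Nat.card_eq_fintype_card,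
    Fintype.card_subtype, Fintype.card_subtype] at this

/-- Key determinism: along a qualified edge, conditioned on the secret, the signal of `w`
is a function of the signal of `v`. -/
lemma qual_det (U : SimpleGraph V)
    (hnd : ∀ v : V, ∃ u : V, U.Adj v u) (hsec : CDSSecure U φ)
    {v w : V} (g : (Fin L → ZMod p) → (Fin L → ZMod p) → (Fin L → ZMod p))
    (hg : ∀ s z, g (φ v s z) (φ w s z) = s) :
    ∀ s z z', φ v s z = φ v s z' → φ w s z = φ w s z' := by
  classical
  intro s₀ z₁ z₂ hveq
  by_contra hw
  obtain ⟨u, hu⟩ := hnd v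
  set A : Finset (Fin L → ZMod p) := Finset.univ.image (fun z => φ v s₀ z) with hA_def
  -- the image of the `v`-signal does not depend on the secret
  have hA : ∀ s : Fin L → ZMod p, Finset.univ.image (fun z => φ v s z) = A := by
    intro s
    ext a
    have h1 : ∀ s' : Fin L → ZMod p, a ∈ Finset.univ.image (fun z => φ v s' z)
        ↔ 0 < (Finset.univ.filter fun z => φ v s' z = a).card := by
      intro s'
      rw [Finset.card_pos]
      constructor
      · rintro h
        obtain ⟨z, _, hz⟩ := Finset.mem_image.mp h
        exact ⟨z, Finset.mem_filter.mpr ⟨Finset.mem_univ _, hz⟩⟩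
      · rintro ⟨z, hz⟩
        exact Finset.mem_image.mpr ⟨z, Finset.mem_univ _, (Finset.mem_filter.mp hz).2⟩
    rw [hA_def, h1 s, h1 s₀, filter_card_const φ U hsec hu s s₀ a]
  set P : (Fin L → ZMod p) → Finset ((Fin L → ZMod p) × (Fin L → ZMod p)) :=
    fun s => Finset.univ.image (fun z => (φ v s z, φ w s z)) with hP_def
  have hPA : ∀ s, (P s).image Prod.fst = A := by
    intro s
    rw [hP_def]
    rw [Finset.image_image]
    exact hA s
  have hcard_ge : ∀ s, A.card ≤ (P s).card := by
    intro s
    rw [← hPA s]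
    exact Finset.card_image_le
  have hg' : ∀ s, ∀ q ∈ P s, g q.1 q.2 = s := by
    intro s q hq
    obtain ⟨z, _, hz⟩ := Finset.mem_image.mp hq
    rw [← hz]
    exact hg s z
  have hdisj : ((Finset.univ : Finset (Fin L → ZMod p)) : Set (Fin L → ZMod p)).PairwiseDisjoint P := by
    intro s _ s' _ hne
    simp only [Function.onFun]
    rw [Finset.disjoint_left]
    intro q hq hq'
    exact hne ((hg' s q hq).symm.trans (hg' s' q hq'))
  have hsub : ∀ s, P s ⊆ A ×ˢ (Finset.univ : Finset (Fin L → ZMod p)) := by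
    intro s q hq
    rw [Finset.mem_product]
    refine ⟨?_, Finset.mem_univ _⟩
    rw [← hPA s]
    exact Finset.mem_image_of_mem _ hq
  have hsum_le : ∑ s : Fin L → ZMod p, (P s).card ≤ A.card * Fintype.card (Fin L → ZMod p) := by
    rw [← Finset.card_biUnion hdisj]
    calc (Finset.univ.biUnion P).card ≤ (A ×ˢ (Finset.univ : Finset (Fin L → ZMod p))).card := by
          apply Finset.card_le_card
          intro q hq
          obtain ⟨s, _, hs⟩ := Finset.mem_biUnion.mp hq
          exact hsub s hs
      _ = A.card * Fintype.card (Fin L → ZMod p) := by rw [Finset.card_product, Finset.card_univ]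
  -- but the fiber of `P s₀` over `a₀` has two elements
  have hstrict : A.card < (P s₀).card := by
    set a₀ := φ v s₀ z₁ with ha₀
    have hfib : (P s₀).card = ∑ a ∈ A, ((P s₀).filter fun q => q.1 = a).card := by
      apply Finset.card_eq_sum_card_fiberwise
      intro q hq
      rw [← hPA s₀]
      exact Finset.mem_image_of_mem _ hq
    have hA_eq : A.card = ∑ a ∈ A, 1 := by simp
    rw [hfib, hA_eq]
    apply Finset.sum_lt_sum
    · intro a ha
      rw [Nat.one_le_iff_ne_zero, ← Nat.pos_iff_ne_zero, Finset.card_pos]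
      obtain ⟨z, _, hz⟩ := Finset.mem_image.mp (hA_def ▸ ha)
      exact ⟨(φ v s₀ z, φ w s₀ z), Finset.mem_filter.mpr
        ⟨Finset.mem_image_of_mem _ (Finset.mem_univ z), hz⟩⟩
    · refine ⟨a₀, ?_, ?_⟩
      · rw [hA_def]
        exact Finset.mem_image_of_mem _ (Finset.mem_univ z₁)
      · rw [Finset.one_lt_card]
        refine ⟨(φ v s₀ z₁, φ w s₀ z₁), ?_, (φ v s₀ z₂, φ w s₀ z₂), ?_, ?_⟩
        · exact Finset.mem_filter.mpr
            ⟨Finset.mem_image_of_mem _ (Finset.mem_univ z₁), rfl⟩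
        · exact Finset.mem_filter.mpr
            ⟨Finset.mem_image_of_mem _ (Finset.mem_univ z₂), hveq.symm⟩
        · intro hcontra
          exact hw (congrArg Prod.snd hcontra)
  have hsum_ge : ∑ s : Fin L → ZMod p, A.card < ∑ s : Fin L → ZMod p, (P s).card :=
    Finset.sum_lt_sum (fun s _ => hcard_ge s) ⟨s₀, Finset.mem_univ _, hstrict⟩
  rw [Finset.sum_const, Finset.card_univ, smul_eq_mul, mul_comm] at hsum_ge
  omega


/-- Determinism extends along qualified reachability. -/
lemma reach_det (Q U : SimpleGraph V)
    (hnd : ∀ v : V, ∃ u : V, U.Adj v u) (hsec : CDSSecure U φ)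
    (hcorr : CDSCorrect Q φ) {v x : V} (h : Q.Reachable v x) :
    ∀ s z z', φ v s z = φ v s z' → φ x s z = φ x s z' := by
  obtain ⟨wk⟩ := h
  induction wk with
  | nil => exact fun _ _ _ h => h
  | cons hadj q ih =>
    intro s z z' hv
    obtain ⟨g, hg⟩ := hcorr _ _ hadj
    exact ih s z z' (qual_det φ U hnd hsec g hg s z z' hv)

/-- Cross-secret signal alignment along an unqualified edge inside a qualified component. -/
lemma unq_align (Q U : SimpleGraph V)
    (hnd : ∀ v : V, ∃ u : V, U.Adj v u) (hsec : CDSSecure U φ)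
    (hcorr : CDSCorrect Q φ) {v u : V} (hadj : U.Adj v u) (hvu : Q.Reachable v u)
    (s s' : Fin L → ZMod p) (z z' : Fin LZ → ZMod p)
    (h : φ v s z = φ v s' z') : φ u s z = φ u s' z' := by
  have h1 : 0 < Nat.card {zz : Fin LZ → ZMod p //
      φ v s zz = φ v s z ∧ φ u s zz = φ u s z} := by
    rw [Nat.card_eq_fintype_card]
    exact Fintype.card_pos_iff.mpr ⟨⟨z, rfl, rfl⟩⟩
  rw [hsec v u hadj s s' (φ v s z) (φ u s z), Nat.card_eq_fintype_card] at h1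
  obtain ⟨z'', hv'', hu''⟩ := Fintype.card_pos_iff.mp h1
  have hstep : φ u s' z' = φ u s' z'' :=
    reach_det φ Q U hnd hsec hcorr hvu s' z' z'' (by rw [← h, ← hv''])
  exact (hstep.trans hu'').symm

/-- Cross-secret signal alignment along an unqualified walk inside a qualified component. -/
lemma walk_align (Q U : SimpleGraph V)
    (hnd : ∀ v : V, ∃ u : V, U.Adj v u) (hsec : CDSSecure U φ)
    (hcorr : CDSCorrect Q φ) {v x : V} (wk : U.Walk v x)
    (hre : ∀ y ∈ wk.support, Q.Reachable v y) :
    ∀ s s' z z', φ v s z = φ v s' z' → φ x s z = φ x s' z' := by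
  revert hre
  induction wk with
  | nil => exact fun _ _ _ _ _ h => h
  | @cons v w x hadj q ih =>
    intro hre s s' z z' hv
    have hvw : Q.Reachable v w := hre w (by
      rw [SimpleGraph.Walk.support_cons]
      exact List.mem_cons_of_mem _ q.start_mem_support)
    have h2 : φ w s z = φ w s' z' :=
      unq_align φ Q U hnd hsec hcorr hadj hvw s s' z z' hv
    refine ih ?_ s s' z z' h2
    intro y hy
    refine hvw.symm.trans (hre y ?_)
    rw [SimpleGraph.Walk.support_cons]
    exact List.mem_cons_of_mem _ hy

end CDSLemmas

/-- Signal Alignment for Unqualified Path within Qualified Component: For a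
non-degenerate CDS instance `(Q, U)` and a CDS scheme over `F_p` with `N = L` (rate `1/2`),
for every unqualified path `(v₁, v₂, …, v_P)` (a walk in `U` with distinct edges) all of
whose vertices lie in the same qualified component of `Q`, the two end signals satisfy
`H(v₁, v_P) ≤ L` in `p`-ary units, where the sample space is the secret–noise pair
`(S, Z)` uniform on `F_p^L × F_p^{L_Z}`. -/
theorem cds_signal_alignment_unqualified_path {V : Type*} [Fintype V] (Q U : SimpleGraph V)
    (p L LZ : ℕ) (hp : p.Prime) [NeZero p]
    (hdisj : ∀ v u : V, ¬ (Q.Adj v u ∧ U.Adj v u))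
    (hnd : ∀ v : V, ∃ u : V, U.Adj v u)
    (φ : V → (Fin L → ZMod p) → (Fin LZ → ZMod p) → (Fin L → ZMod p))
    (hcorr : CDSCorrect Q φ) (hsec : CDSSecure U φ)
    (v₁ vP : V) (w : U.Walk v₁ vP) (htrail : w.IsTrail)
    (hsupp : ∀ x ∈ w.support, Q.connectedComponentMk x = Q.connectedComponentMk v₁) :
    entp p (fun ω : (Fin L → ZMod p) × (Fin LZ → ZMod p) =>
        (φ v₁ ω.1 ω.2, φ vP ω.1 ω.2)) ≤ L := by
  classical
  haveI : Nonempty ((Fin L → ZMod p) × (Fin LZ → ZMod p)) :=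
    ⟨(fun _ => 0, fun _ => 0)⟩
  have hp1 : 1 < p := hp.one_lt
  have hreach : ∀ y ∈ w.support, Q.Reachable v₁ y := fun y hy =>
    (SimpleGraph.ConnectedComponent.eq.mp (hsupp y hy)).symm
  have halign := walk_align φ Q U hnd hsec hcorr w hreach
  set X : (Fin L → ZMod p) × (Fin LZ → ZMod p) →
      (Fin L → ZMod p) × (Fin L → ZMod p) :=
    fun ω => (φ v₁ ω.1 ω.2, φ vP ω.1 ω.2) with hX
  set T := Finset.univ.image X with hT
  have hXT : ∀ ω, X ω ∈ T := fun ω => Finset.mem_image_of_mem _ (Finset.mem_univ ω)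
  have hTne : T.Nonempty := ⟨X Classical.ofNonempty, hXT _⟩
  have hTcard : T.card ≤ p ^ L := by
    have hinj : Set.InjOn Prod.fst (↑T : Set ((Fin L → ZMod p) × (Fin L → ZMod p))) := by
      intro q hq q' hq' hfst
      rw [Finset.mem_coe] at hq hq'
      obtain ⟨ω, _, rfl⟩ := Finset.mem_image.mp hq
      obtain ⟨ω', _, rfl⟩ := Finset.mem_image.mp hq'
      have hsnd := halign ω.1 ω'.1 ω.2 ω'.2 hfst
      exact Prod.ext hfst hsnd
    calc T.card = (T.image Prod.fst).card := (Finset.card_image_of_injOn hinj).symm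
      _ ≤ Fintype.card (Fin L → ZMod p) :=
          (Finset.card_le_univ _)
      _ = p ^ L := by simp [ZMod.card]
  refine (entp_le_logb_card p hp1 X T hXT).trans ?_
  have hcast : ((p : ℝ)) ^ L = ((p ^ L : ℕ) : ℝ) := by push_cast; ring
  calc Real.logb p (T.card : ℝ)
      ≤ Real.logb p ((p : ℝ) ^ L) := by
        rw [hcast]
        refine Real.logb_le_logb_of_le (by exact_mod_cast hp1) ?_ ?_
        · exact_mod_cast hTne.card_pos
        · exact_mod_cast hTcard
    _ = L := by
        rw [Real.logb_pow, Real.logb_self_eq_one (by exact_mod_cast hp1)]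
        simp
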